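/- arXiv:0709.3896 — 3 statements merged into one kernel-verified Lean document; each statement's English description precedes it below -/
import Mathlib

section
/- The series \(\sum_{k=1}^{\infty} (2k^{2H} - (k-1)^{2H} - (k+1)^{2H})^2\) converges if and only if \(H \in (1/2, 3/4)\). -/
open Real Filter

private lemma hasDerivAt_shift_rpow (p c x : ℝ) (hx : x + c ≠ 0) :
    HasDerivAt (fun y : ℝ => (y + c) ^ p) (p * (x + c) ^ (p - 1)) x := by
  have h := (Real.hasDerivAt_rpow_const (x := x + c) (p := p) (Or.inl hx)).comp x
    ((hasDerivAt_id x).add_const c)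
  simpa [Function.comp_def] using h

/-- Second-difference mean value lemma for `x ^ p`. -/
private lemma second_diff_mvt (p : ℝ) (a : ℝ) (ha : 1 ≤ a) :
    ∃ ξ, a < ξ ∧ ξ < a + 2 ∧
      2 * (a + 1) ^ p - a ^ p - (a + 2) ^ p = -(p * (p - 1) * ξ ^ (p - 2)) := by
  have hapos : (0:ℝ) < a := lt_of_lt_of_le one_pos ha
  -- first MVT on f1 x = (x+1)^p - x^p over [a, a+1]
  have hcont1 : ContinuousOn (fun x : ℝ => (x + 1) ^ p - x ^ p) (Set.Icc a (a + 1)) := by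
    intro x hx
    have hx0 : (0:ℝ) < x := lt_of_lt_of_le hapos hx.1
    exact (((hasDerivAt_shift_rpow p 1 x (by linarith)).sub
      (Real.hasDerivAt_rpow_const (x := x) (p := p)
        (Or.inl hx0.ne'))).continuousAt).continuousWithinAt
  have hderiv1 : ∀ x ∈ Set.Ioo a (a + 1),
      HasDerivAt (fun x : ℝ => (x + 1) ^ p - x ^ p)
        ((fun x => p * (x + 1) ^ (p - 1) - p * x ^ (p - 1)) x) x := by
    intro x hx
    have hx0 : (0:ℝ) < x := lt_trans hapos hx.1
    exact (hasDerivAt_shift_rpow p 1 x (by linarith)).sub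
      (Real.hasDerivAt_rpow_const (x := x) (p := p) (Or.inl hx0.ne'))
  obtain ⟨c, hc, hc2⟩ := exists_hasDerivAt_eq_slope
    (fun x : ℝ => (x + 1) ^ p - x ^ p)
    (fun x => p * (x + 1) ^ (p - 1) - p * x ^ (p - 1))
    (by linarith : a < a + 1) hcont1 hderiv1
  have hcpos : (0:ℝ) < c := lt_trans hapos hc.1
  -- second MVT on f2 x = p * x^(p-1) over [c, c+1]
  have hcont2 : ContinuousOn (fun x : ℝ => p * x ^ (p - 1)) (Set.Icc c (c + 1)) := by
    intro x hx
    have hx0 : (0:ℝ) < x := lt_of_lt_of_le hcpos hx.1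
    exact (((Real.hasDerivAt_rpow_const (x := x) (p := p - 1)
      (Or.inl hx0.ne')).const_mul p).continuousAt).continuousWithinAt
  have hderiv2 : ∀ x ∈ Set.Ioo c (c + 1),
      HasDerivAt (fun x : ℝ => p * x ^ (p - 1))
        ((fun x => p * ((p - 1) * x ^ (p - 1 - 1))) x) x := by
    intro x hx
    have hx0 : (0:ℝ) < x := lt_trans hcpos hx.1
    exact (Real.hasDerivAt_rpow_const (x := x) (p := p - 1) (Or.inl hx0.ne')).const_mul p
  obtain ⟨ξ, hξ, hξ2⟩ := exists_hasDerivAt_eq_slope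
    (fun x : ℝ => p * x ^ (p - 1))
    (fun x => p * ((p - 1) * x ^ (p - 1 - 1)))
    (by linarith : c < c + 1) hcont2 hderiv2
  have hone : c + 1 - c = (1:ℝ) := by ring
  have hone' : a + 1 - a = (1:ℝ) := by ring
  rw [hone, div_one] at hξ2
  rw [hone', div_one] at hc2
  refine ⟨ξ, lt_trans hc.1 hξ.1, by nlinarith [hξ.2, hc.2], ?_⟩
  have h12 : p - 1 - 1 = p - 2 := by ring
  rw [h12] at hξ2
  have h2a : a + 1 + 1 = a + 2 := by ring
  rw [h2a] at hc2
  nlinarith [hξ2, hc2]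

private lemma term_bounds (p a : ℝ) (ha : 1 ≤ a) (hp2 : p < 2) :
    (p * (p - 1)) ^ 2 * (a + 2) ^ (2 * p - 4)
      ≤ (2 * (a + 1) ^ p - a ^ p - (a + 2) ^ p) ^ 2 ∧
    (2 * (a + 1) ^ p - a ^ p - (a + 2) ^ p) ^ 2
      ≤ (p * (p - 1)) ^ 2 * a ^ (2 * p - 4) := by
  obtain ⟨ξ, hξ1, hξ2, he⟩ := second_diff_mvt p a ha
  have hapos : (0:ℝ) < a := by linarith
  have hξpos : (0:ℝ) < ξ := by linarith
  have hmul : ξ ^ (p - 2) * ξ ^ (p - 2) = ξ ^ (2 * p - 4) := by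
    rw [← Real.rpow_add hξpos]; ring_nf
  have hsq : (2 * (a + 1) ^ p - a ^ p - (a + 2) ^ p) ^ 2
      = (p * (p - 1)) ^ 2 * ξ ^ (2 * p - 4) := by
    rw [he, neg_sq, mul_pow, pow_two (ξ ^ (p - 2)), hmul]
  have hqle : 2 * p - 4 ≤ 0 := by linarith
  have hub : ξ ^ (2 * p - 4) ≤ a ^ (2 * p - 4) :=
    Real.rpow_le_rpow_of_nonpos hapos hξ1.le hqle
  have hlb : (a + 2) ^ (2 * p - 4) ≤ ξ ^ (2 * p - 4) :=
    Real.rpow_le_rpow_of_nonpos hξpos hξ2.le hqle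
  have hC : (0:ℝ) ≤ (p * (p - 1)) ^ 2 := sq_nonneg _
  constructor
  · rw [hsq]; exact mul_le_mul_of_nonneg_left hlb hC
  · rw [hsq]; exact mul_le_mul_of_nonneg_left hub hC

/-- The series `∑_{k≥1} (2k^{2H} - (k-1)^{2H} - (k+1)^{2H})^2` converges
iff `H ∈ (1/2, 3/4)`, for `H ∈ (1/2, 1)`. -/
theorem stmt_0 (H : ℝ) (h1 : 1/2 < H) (h2 : H < 1) :
    Summable (fun k : ℕ =>
      (2 * ((k + 1 : ℕ) : ℝ) ^ (2 * H) - ((k : ℕ) : ℝ) ^ (2 * H)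
        - ((k + 2 : ℕ) : ℝ) ^ (2 * H)) ^ 2) ↔ H < 3/4 := by
  set p : ℝ := 2 * H with hp
  have hp1 : 1 < p := by rw [hp]; linarith
  have hp2 : p < 2 := by rw [hp]; linarith
  set q : ℝ := 2 * p - 4 with hq
  set C : ℝ := (p * (p - 1)) ^ 2 with hC
  have hCpos : 0 < C := pow_pos (by nlinarith) 2
  set f : ℕ → ℝ := fun k : ℕ =>
      (2 * ((k + 1 : ℕ) : ℝ) ^ (2 * H) - ((k : ℕ) : ℝ) ^ (2 * H)
        - ((k + 2 : ℕ) : ℝ) ^ (2 * H)) ^ 2 with hf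
  have hfb : ∀ k : ℕ, C * ((k:ℝ) + 3) ^ q ≤ f (k + 1) ∧
      f (k + 1) ≤ C * ((k:ℝ) + 1) ^ q := by
    intro k
    have hb := term_bounds p ((k:ℝ) + 1) (le_add_of_nonneg_left (Nat.cast_nonneg k)) hp2
    have hfe : f (k + 1)
        = (2 * (((k:ℝ) + 1) + 1) ^ p - ((k:ℝ) + 1) ^ p - (((k:ℝ) + 1) + 2) ^ p) ^ 2 := by
      simp only [hf]
      push_cast
      ring_nf
      rw [hp, mul_comm 2 H]
    have h3 : ((k:ℝ) + 1) + 2 = (k:ℝ) + 3 := by ring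
    rw [h3] at hb
    rw [hfe, h3, hC, hq]
    exact hb
  constructor
  · intro hs
    by_contra hlt
    push_neg at hlt
    have hqge : -1 ≤ q := by rw [hq, hp]; linarith
    have hs1 : Summable (fun k : ℕ => f (k + 1)) := (summable_nat_add_iff 1).mpr hs
    have hcomp : Summable (fun k : ℕ => C * ((k:ℝ) + 3) ^ q) :=
      Summable.of_nonneg_of_le (fun k => by positivity) (fun k => (hfb k).1) hs1
    have h3 : Summable (fun k : ℕ => ((k:ℝ) + 3) ^ q) :=
      (summable_mul_left_iff hCpos.ne').mp hcomp
    have h4 : Summable (fun k : ℕ => (((k + 3 : ℕ)):ℝ) ^ q) := by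
      refine h3.congr fun k => ?_
      push_cast; ring_nf
    have h5 : Summable (fun k : ℕ => ((k:ℕ):ℝ) ^ q) :=
      (summable_nat_add_iff 3).mp h4
    have := Real.summable_nat_rpow.mp h5
    rw [hq, hp] at this
    linarith
  · intro h34
    have hqlt : q < -1 := by rw [hq, hp]; linarith
    have hbase : Summable (fun k : ℕ => ((k:ℕ):ℝ) ^ q) := Real.summable_nat_rpow.mpr hqlt
    have h1' : Summable (fun k : ℕ => C * ((k:ℝ) + 1) ^ q) := by
      have := ((summable_nat_add_iff 1).mpr hbase).mul_left C
      refine this.congr fun k => ?_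
      push_cast; ring_nf
    have hs1 : Summable (fun k : ℕ => f (k + 1)) :=
      Summable.of_nonneg_of_le (fun k => sq_nonneg _) (fun k => (hfb k).2) h1'
    exact (summable_nat_add_iff 1).mp hs1
end

section
/- When \(H \in (3/4, 1)\), the quantity \(N^2 \sum_{|i-j| \geq 2,\, 1 \le i,j \le N} \big(2|\tfrac{i-j}{N}|^{2H} - |\tfrac{i-j-1}{N}|^{2H} - |\tfrac{i-j+1}{N}|^{2H}\big)^2\) converges, as \(N \to \infty\), to \(H^2(2H-1)/(H - 3/4)\). -/
open Real Filter Finset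


lemma slope_rpow {p a b : ℝ} (hp : -1 < p) (ha : 0 ≤ a) (hab : a < b) :
    ∃ ξ ∈ Set.Ioo a b, b ^ (p+1) - a ^ (p+1) = (p+1) * ξ ^ p * (b - a) := by
  obtain ⟨ξ, hξ, h⟩ := exists_hasDerivAt_eq_slope (fun x => x ^ (p+1))
      (fun x => (p+1) * x ^ p) hab
      (fun x hx => (Real.continuousAt_rpow_const x (p+1)
        (Or.inr (by linarith))).continuousWithinAt)
      (fun x hx => by
        have hx0 : x ≠ 0 := ne_of_gt (lt_of_le_of_lt ha hx.1)
        simpa [add_sub_cancel_right] using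
          Real.hasDerivAt_rpow_const (x := x) (p := p+1) (Or.inl hx0))
  refine ⟨ξ, hξ, ?_⟩
  have hba : b - a ≠ 0 := sub_ne_zero.2 hab.ne'
  field_simp at h
  linarith [h]

lemma second_diff_bounds {q x : ℝ} (hq1 : 1 < q) (hq2 : q < 2) (hx : 1 < x) :
    q*(q-1)*(x+1)^(q-2) ≤ (x+1)^q - 2*x^q + (x-1)^q ∧
    (x+1)^q - 2*x^q + (x-1)^q ≤ q*(q-1)*(x-1)^(q-2) := by
  have h1 : x - 1 < x := by linarith
  obtain ⟨ξ, hξ, hψ⟩ := exists_hasDerivAt_eq_slope (fun t => (t+1)^q - t^q)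
      (fun t => q*(t+1)^(q-1) - q*t^(q-1)) h1
      (fun t ht => by
        have ht0 : (0:ℝ) < t := lt_of_lt_of_le (by linarith) ht.1
        have c1 : ContinuousAt (fun s:ℝ => (s+1)^q) t :=
          ((continuousAt_id.add continuousAt_const).rpow_const (Or.inl (show (0:ℝ) < t + 1 by linarith).ne'))
        have c2 : ContinuousAt (fun s:ℝ => s^q) t :=
          Real.continuousAt_rpow_const t q (Or.inl (ne_of_gt ht0))
        exact (c1.sub c2).continuousWithinAt)
      (fun t ht => by
        have ht0 : (0:ℝ) < t := lt_of_lt_of_le (by linarith) (le_of_lt ht.1)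
        have d1 : HasDerivAt (fun s:ℝ => (s+1)^q) (q*(t+1)^(q-1)) t := by
          have h := Real.hasDerivAt_rpow_const (x := t+1) (p := q) (Or.inl (by positivity))
          simpa [Function.comp_def] using h.comp t ((hasDerivAt_id t).add_const 1)
        have d2 : HasDerivAt (fun s:ℝ => s^q) (q*t^(q-1)) t :=
          Real.hasDerivAt_rpow_const (Or.inl (ne_of_gt ht0))
        exact d1.sub d2)
  have hξ0 : (0:ℝ) < ξ := lt_of_le_of_lt (by linarith) hξ.1
  obtain ⟨η, hη, hsl⟩ := slope_rpow (p := q-2) (a := ξ) (b := ξ+1)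
      (by linarith) (le_of_lt hξ0) (by linarith)
  have hden : x - (x-1) = 1 := by ring
  rw [hden, div_one] at hψ
  have hΔ : (x+1)^q - 2*x^q + (x-1)^q = q*(q-1)*η^(q-2) := by
    have : (q-2)+1 = q-1 := by ring
    rw [this] at hsl
    have : (ξ+1) - ξ = 1 := by ring
    rw [this, mul_one] at hsl
    have hxx : x - 1 + 1 = x := by ring
    rw [hxx] at hψ
    linear_combination q * hsl - hψ
  have hη0 : (0:ℝ) < η := lt_trans hξ0 hη.1
  have hqq : (0:ℝ) ≤ q*(q-1) := by nlinarith
  constructor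
  · rw [hΔ]
    exact mul_le_mul_of_nonneg_left
      (Real.rpow_le_rpow_of_nonpos hη0 (by nlinarith [hη.2, hξ.2]) (by linarith)) hqq
  · rw [hΔ]
    exact mul_le_mul_of_nonneg_left
      (Real.rpow_le_rpow_of_nonpos (by linarith) (by nlinarith [hη.1, hξ.1]) (by linarith)) hqq


noncomputable def sig (p : ℝ) (m : ℕ) : ℝ := (((m:ℝ)+1)^(p+1) - (m:ℝ)^(p+1))/(p+1)

lemma sig_left {p : ℝ} (hp : -1 < p) {m : ℕ} (hm : 1 ≤ m) :
    ∃ ξ ∈ Set.Ioo ((m:ℝ)-1) (m:ℝ), sig p (m-1) = ξ ^ p := by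
  have hm1 : (1:ℝ) ≤ (m:ℝ) := by exact_mod_cast hm
  obtain ⟨ξ, hξ, h⟩ := slope_rpow hp (a := (m:ℝ)-1) (b := (m:ℝ)) (by linarith) (by linarith)
  refine ⟨ξ, hξ, ?_⟩
  have hc : ((m-1:ℕ):ℝ) = (m:ℝ)-1 := by
    push_cast [Nat.cast_sub hm]; ring
  have hne : p+1 ≠ 0 := by linarith
  unfold sig
  rw [hc, sub_add_cancel]
  field_simp
  linear_combination h

lemma sig_right {p : ℝ} (hp : -1 < p) (m : ℕ) :
    ∃ ξ ∈ Set.Ioo ((m:ℝ)) ((m:ℝ)+1), sig p m = ξ ^ p := by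
  obtain ⟨ξ, hξ, h⟩ := slope_rpow hp (a := (m:ℝ)) (b := (m:ℝ)+1) (by positivity) (by linarith)
  refine ⟨ξ, hξ, ?_⟩
  have hne : p+1 ≠ 0 := by linarith
  unfold sig
  field_simp
  linear_combination h

lemma sig_tel1 {p : ℝ} (hp : -1 < p) (N : ℕ) :
    ∑ m ∈ Icc 1 N, sig p m = (((N:ℝ)+1)^(p+1) - 1)/(p+1) := by
  rw [← Finset.Ico_add_one_right_eq_Icc, Finset.sum_Ico_eq_sum_range]
  simp only [Nat.succ_sub_one, Nat.add_sub_cancel]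
  have : ∀ i ∈ range N, sig p (1+i) =
      ((((i+1:ℕ)):ℝ)+1)^(p+1)/(p+1) - (((i:ℕ):ℝ)+1)^(p+1)/(p+1) := by
    intro i _
    unfold sig
    push_cast
    ring
  rw [Finset.sum_congr rfl this, Finset.sum_range_sub (fun i => (((i:ℕ):ℝ)+1)^(p+1)/(p+1)) N]
  simp [Real.one_rpow]
  ring

lemma sig_tel0 {p : ℝ} (hp : -1 < p) (N : ℕ) :
    ∑ m ∈ Icc 1 N, sig p (m-1) = (N:ℝ)^(p+1)/(p+1) := by
  rw [← Finset.Ico_add_one_right_eq_Icc, Finset.sum_Ico_eq_sum_range]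
  simp only [Nat.succ_sub_one, Nat.add_sub_cancel]
  have h0 : ∀ i ∈ range N, sig p (1+i-1) =
      (((i+1:ℕ)):ℝ)^(p+1)/(p+1) - ((i:ℕ):ℝ)^(p+1)/(p+1) := by
    intro i _
    have : 1+i-1 = i := by omega
    rw [this]
    unfold sig
    push_cast
    ring
  rw [Finset.sum_congr rfl h0, Finset.sum_range_sub (fun i => ((i:ℕ):ℝ)^(p+1)/(p+1)) N]
  simp [Real.zero_rpow (by linarith : p+1 ≠ 0)]

lemma sum_rpow_tendsto {p : ℝ} (hp : -1 < p) :
    Tendsto (fun N : ℕ => (∑ m ∈ Icc 1 N, (m:ℝ)^p) / (N:ℝ)^(p+1))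
      atTop (nhds (1/(p+1))) := by
  have hp1 : (0:ℝ) < p+1 := by linarith
  -- limit of lower/upper model sequences
  have T1 : Tendsto (fun N:ℕ => (((N:ℝ)+1)/(N:ℝ))^(p+1)) atTop (nhds 1) := by
    have h0 : Tendsto (fun N:ℕ => ((N:ℝ)+1)/(N:ℝ)) atTop (nhds 1) := by
      have := (tendsto_const_nhds (x := (1:ℝ)) (f := atTop (α := ℕ))).add
        tendsto_one_div_atTop_nhds_zero_nat
      rw [add_zero] at this
      apply this.congr'
      filter_upwards [eventually_ge_atTop 1] with N hN
      have : (N:ℝ) ≠ 0 := by positivity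
      field_simp
    have hc : ContinuousAt (fun x:ℝ => x^(p+1)) 1 :=
      Real.continuousAt_rpow_const 1 (p+1) (Or.inl one_ne_zero)
    have := (hc.tendsto.comp h0)
    simpa [Real.one_rpow, Function.comp_def] using this
  have T2 : Tendsto (fun N:ℕ => (N:ℝ)^(-(p+1))) atTop (nhds 0) :=
    (tendsto_rpow_neg_atTop hp1).comp tendsto_natCast_atTop_atTop
  have hLo : Tendsto (fun N:ℕ => ((((N:ℝ)+1)^(p+1) - 1)/(p+1)) / (N:ℝ)^(p+1))
      atTop (nhds (1/(p+1))) := by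
    have := (T1.sub T2).div_const (p+1)
    rw [sub_zero] at this
    apply this.congr'
    filter_upwards [eventually_ge_atTop 1] with N hN
    have hN0 : (0:ℝ) < (N:ℝ) := by exact_mod_cast hN
    have hNr : (0:ℝ) < (N:ℝ)^(p+1) := Real.rpow_pos_of_pos hN0 _
    rw [Real.div_rpow (by positivity) (le_of_lt hN0), Real.rpow_neg (le_of_lt hN0),
      inv_eq_one_div, div_sub_div_same, div_div, div_div, mul_comm]
  have hUp : Tendsto (fun N:ℕ => ((N:ℝ)^(p+1)/(p+1)) / (N:ℝ)^(p+1))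
      atTop (nhds (1/(p+1))) := by
    apply (tendsto_const_nhds (x := 1/(p+1)) (f := atTop (α := ℕ))).congr'
    filter_upwards [eventually_ge_atTop 1] with N hN
    have hN0 : (0:ℝ) < (N:ℝ) := by exact_mod_cast hN
    have hNr : (0:ℝ) < (N:ℝ)^(p+1) := Real.rpow_pos_of_pos hN0 _
    rw [div_div, div_eq_div_iff (by positivity) (by positivity)]
    ring
  -- termwise comparisons
  rcases le_or_gt p 0 with hps | hps
  · -- p ≤ 0 : decreasing
    apply tendsto_of_tendsto_of_tendsto_of_le_of_le' hLo hUp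
    · filter_upwards [eventually_ge_atTop 1] with N hN
      rw [← sig_tel1 hp N]
      have hN0 : (0:ℝ) < (N:ℝ) := by exact_mod_cast hN
      apply div_le_div_of_nonneg_right ?_ (Real.rpow_pos_of_pos hN0 _).le
      apply Finset.sum_le_sum
      intro m hm
      obtain ⟨ξ, hξ, he⟩ := sig_right hp m
      have hm1 : (1:ℝ) ≤ (m:ℝ) := by exact_mod_cast (Finset.mem_Icc.1 hm).1
      rw [he]
      exact Real.rpow_le_rpow_of_nonpos (by linarith) (le_of_lt hξ.1) hps
    · filter_upwards [eventually_ge_atTop 1] with N hN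
      rw [← sig_tel0 hp N]
      have hN0 : (0:ℝ) < (N:ℝ) := by exact_mod_cast hN
      apply div_le_div_of_nonneg_right ?_ (Real.rpow_pos_of_pos hN0 _).le
      apply Finset.sum_le_sum
      intro m hm
      obtain ⟨ξ, hξ, he⟩ := sig_left hp (Finset.mem_Icc.1 hm).1
      have hm1 : (1:ℝ) ≤ (m:ℝ) := by exact_mod_cast (Finset.mem_Icc.1 hm).1
      have hξ0 : (0:ℝ) < ξ := by
        have h := hξ.1; linarith
      rw [he]
      exact Real.rpow_le_rpow_of_nonpos hξ0 (le_of_lt hξ.2) hps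
  · -- 0 < p : increasing
    apply tendsto_of_tendsto_of_tendsto_of_le_of_le' hUp hLo
    · filter_upwards [eventually_ge_atTop 1] with N hN
      rw [← sig_tel0 hp N]
      have hN0 : (0:ℝ) < (N:ℝ) := by exact_mod_cast hN
      apply div_le_div_of_nonneg_right ?_ (Real.rpow_pos_of_pos hN0 _).le
      apply Finset.sum_le_sum
      intro m hm
      obtain ⟨ξ, hξ, he⟩ := sig_left hp (Finset.mem_Icc.1 hm).1
      have hm1 : (1:ℝ) ≤ (m:ℝ) := by exact_mod_cast (Finset.mem_Icc.1 hm).1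
      have hξ0 : (0:ℝ) ≤ ξ := by
        have h := hξ.1; linarith
      rw [he]
      exact Real.rpow_le_rpow hξ0 (le_of_lt hξ.2) (le_of_lt hps)
    · filter_upwards [eventually_ge_atTop 1] with N hN
      rw [← sig_tel1 hp N]
      have hN0 : (0:ℝ) < (N:ℝ) := by exact_mod_cast hN
      apply div_le_div_of_nonneg_right ?_ (Real.rpow_pos_of_pos hN0 _).le
      apply Finset.sum_le_sum
      intro m hm
      obtain ⟨ξ, hξ, he⟩ := sig_right hp m
      rw [he]
      exact Real.rpow_le_rpow (by positivity) (le_of_lt hξ.1) (le_of_lt hps)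

lemma ite_filter_sum (F : ℕ → ℝ) (n : ℕ) :
    ∑ k ∈ Icc 1 n, (if 2 ≤ k then F k else 0) = ∑ k ∈ Icc 2 n, F k := by
  rw [← Finset.sum_filter]
  congr 1
  ext x
  simp only [Finset.mem_filter, Finset.mem_Icc]
  omega

lemma double_sum_eq (F : ℕ → ℝ) (N : ℕ) :
    ∑ i ∈ Icc 1 N, ∑ j ∈ Icc 1 N,
      (if 2 ≤ ((i:ℤ) - (j:ℤ)).natAbs then F ((i:ℤ) - (j:ℤ)).natAbs else 0)
    = ∑ k ∈ Icc 2 N, 2*((N:ℝ) - (k:ℝ)) * F k := by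
  induction N with
  | zero => simp
  | succ n ih =>
    have hinner : ∀ i : ℕ, ∑ j ∈ Icc 1 (n+1),
        (if 2 ≤ ((i:ℤ) - (j:ℤ)).natAbs then F ((i:ℤ) - (j:ℤ)).natAbs else 0)
        = (∑ j ∈ Icc 1 n, (if 2 ≤ ((i:ℤ) - (j:ℤ)).natAbs then F ((i:ℤ) - (j:ℤ)).natAbs else 0))
          + (if 2 ≤ ((i:ℤ) - ((n+1:ℕ):ℤ)).natAbs then F ((i:ℤ) - ((n+1:ℕ):ℤ)).natAbs else 0) :=
      fun i => Finset.sum_Icc_succ_top (by omega) _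
    rw [Finset.sum_Icc_succ_top (show 1 ≤ n+1 by omega)]
    simp only [hinner]
    rw [Finset.sum_add_distrib, ih]
    have claimA : ∑ j ∈ Icc 1 n,
        (if 2 ≤ (((n+1:ℕ):ℤ) - (j:ℤ)).natAbs then F ((((n+1:ℕ):ℤ)) - (j:ℤ)).natAbs else 0)
        = ∑ k ∈ Icc 2 n, F k := by
      rw [← ite_filter_sum F n]
      apply Finset.sum_nbij' (i := fun j => n+1-j) (j := fun k => n+1-k)
      · intro a ha; simp only [Finset.mem_Icc] at *; omega
      · intro a ha; simp only [Finset.mem_Icc] at *; omega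
      · intro a ha; simp only [Finset.mem_Icc] at *; omega
      · intro a ha; simp only [Finset.mem_Icc] at *; omega
      · intro a ha
        simp only [Finset.mem_Icc] at ha
        have : (((n+1:ℕ):ℤ) - (a:ℤ)).natAbs = n+1-a := by omega
        rw [this]
    have claimB : ∑ i ∈ Icc 1 n,
        (if 2 ≤ ((i:ℤ) - ((n+1:ℕ):ℤ)).natAbs then F ((i:ℤ) - (((n+1:ℕ):ℤ))).natAbs else 0)
        = ∑ k ∈ Icc 2 n, F k := by
      rw [← ite_filter_sum F n]
      apply Finset.sum_nbij' (i := fun j => n+1-j) (j := fun k => n+1-k)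
      · intro a ha; simp only [Finset.mem_Icc] at *; omega
      · intro a ha; simp only [Finset.mem_Icc] at *; omega
      · intro a ha; simp only [Finset.mem_Icc] at *; omega
      · intro a ha; simp only [Finset.mem_Icc] at *; omega
      · intro a ha
        simp only [Finset.mem_Icc] at ha
        have : (((a:ℕ):ℤ) - ((n+1:ℕ):ℤ)).natAbs = n+1-a := by omega
        rw [this]
    have hzero : (if 2 ≤ ((((n+1:ℕ)):ℤ) - (((n+1:ℕ)):ℤ)).natAbs
        then F ((((n+1:ℕ)):ℤ) - (((n+1:ℕ)):ℤ)).natAbs else 0) = 0 := by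
      rw [if_neg]; omega
    rw [claimA, claimB, hzero]
    rcases Nat.eq_zero_or_pos n with hn | hn
    · subst hn; simp
    · rw [Finset.sum_Icc_succ_top (show 2 ≤ n+1 by omega)]
      rw [show (2:ℝ)*(((n+1:ℕ):ℝ) - ((n+1:ℕ):ℝ)) * F (n+1) = 0 by ring, add_zero, add_zero,
        ← Finset.sum_add_distrib, ← Finset.sum_add_distrib]
      apply Finset.sum_congr rfl
      intro k hk
      push_cast
      ring


lemma rpow_sq {x : ℝ} (hx : 0 ≤ x) (a : ℝ) : (x^a)^(2:ℕ) = x^(2*a) := by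
  rw [← Real.rpow_natCast (x^a) 2, ← Real.rpow_mul hx]
  rw [show a*((2:ℕ):ℝ) = 2*a by push_cast; ring]

lemma hi_sum (p : ℝ) (N : ℕ) :
    ∑ k ∈ Icc 2 N, ((N:ℝ)-(k:ℝ))*((k:ℝ)-1)^p
      = ((N:ℝ)-1) * (∑ m ∈ Icc 1 (N-1), (m:ℝ)^p) - ∑ m ∈ Icc 1 (N-1), (m:ℝ)^(p+1) := by
  have step1 : ∑ k ∈ Icc 2 N, ((N:ℝ)-(k:ℝ))*((k:ℝ)-1)^p
      = ∑ m ∈ Icc 1 (N-1), (((N:ℝ)-1)*(m:ℝ)^p - (m:ℝ)^(p+1)) := by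
    apply Finset.sum_nbij' (i := fun k => k-1) (j := fun m => m+1)
    · intro a ha; simp only [Finset.mem_Icc] at *; omega
    · intro a ha; simp only [Finset.mem_Icc] at *; omega
    · intro a ha; simp only [Finset.mem_Icc] at ha; omega
    · intro a ha; simp only [Finset.mem_Icc] at ha; omega
    · intro a ha
      simp only [Finset.mem_Icc] at ha
      have h1 : (1:ℕ) ≤ a := by omega
      have hc : ((a-1:ℕ):ℝ) = (a:ℝ)-1 := by push_cast [h1]; ring
      have ha2 : (2:ℝ) ≤ (a:ℝ) := by exact_mod_cast ha.1
      rw [hc, Real.rpow_add_one (by linarith : (a:ℝ)-1 ≠ 0) p]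
      ring
  rw [step1, Finset.sum_sub_distrib, ← Finset.mul_sum]

lemma lo_sum (p : ℝ) (N : ℕ) (hN : 1 ≤ N) :
    ∑ k ∈ Icc 2 N, ((N:ℝ)-(k:ℝ))*((k:ℝ)+1)^p
      = ((N:ℝ)+1) * (∑ m ∈ Icc 1 (N+1), (m:ℝ)^p) - (∑ m ∈ Icc 1 (N+1), (m:ℝ)^(p+1))
        - (N:ℝ) - ((N:ℝ)-1)*(2:ℝ)^p := by
  have step1 : ∑ k ∈ Icc 2 N, ((N:ℝ)-(k:ℝ))*((k:ℝ)+1)^p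
      = ∑ m ∈ Icc 3 (N+1), (((N:ℝ)+1)-(m:ℝ))*(m:ℝ)^p := by
    apply Finset.sum_nbij' (i := fun k => k+1) (j := fun m => m-1)
    · intro a ha; simp only [Finset.mem_Icc] at *; omega
    · intro a ha; simp only [Finset.mem_Icc] at *; omega
    · intro a ha; simp only [Finset.mem_Icc] at ha; omega
    · intro a ha; simp only [Finset.mem_Icc] at ha; omega
    · intro a ha
      push_cast
      ring
  have split : Icc 1 (N+1) = insert 1 (insert 2 (Icc 3 (N+1))) := by
    ext x
    simp only [Finset.mem_Icc, Finset.mem_insert]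
    omega
  have big : ∑ m ∈ Icc 1 (N+1), (((N:ℝ)+1)-(m:ℝ))*(m:ℝ)^p
      = ((N:ℝ)+1) * (∑ m ∈ Icc 1 (N+1), (m:ℝ)^p) - ∑ m ∈ Icc 1 (N+1), (m:ℝ)^(p+1) := by
    rw [Finset.mul_sum, ← Finset.sum_sub_distrib]
    apply Finset.sum_congr rfl
    intro m hm
    simp only [Finset.mem_Icc] at hm
    have h1 : (1:ℝ) ≤ (m:ℝ) := by exact_mod_cast hm.1
    rw [Real.rpow_add_one (by linarith : (m:ℝ) ≠ 0) p]
    ring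
  have hsum3 : ∑ m ∈ Icc 3 (N+1), (((N:ℝ)+1)-(m:ℝ))*(m:ℝ)^p
      = (∑ m ∈ Icc 1 (N+1), (((N:ℝ)+1)-(m:ℝ))*(m:ℝ)^p) - (N:ℝ) - ((N:ℝ)-1)*(2:ℝ)^p := by
    rw [split, Finset.sum_insert (by simp only [Finset.mem_insert, Finset.mem_Icc]; omega),
      Finset.sum_insert (by simp only [Finset.mem_Icc]; omega)]
    push_cast
    rw [Real.one_rpow]
    ring
  rw [step1, hsum3, big]


lemma summand_eq (H : ℝ) (N i j : ℕ) :
    (if 2 ≤ |(i : ℤ) - (j : ℤ)| then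
          (2 * |((i : ℝ) - (j : ℝ)) / N| ^ (2 * H)
            - |((i : ℝ) - (j : ℝ) - 1) / N| ^ (2 * H)
            - |((i : ℝ) - (j : ℝ) + 1) / N| ^ (2 * H)) ^ 2
        else 0)
    = (if 2 ≤ ((i:ℤ) - (j:ℤ)).natAbs then
          (2 * |((((i:ℤ) - (j:ℤ)).natAbs : ℝ)) / N| ^ (2 * H)
            - |((((i:ℤ) - (j:ℤ)).natAbs : ℝ) - 1) / N| ^ (2 * H)
            - |((((i:ℤ) - (j:ℤ)).natAbs : ℝ) + 1) / N| ^ (2 * H)) ^ 2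
        else 0) := by
  by_cases hc : 2 ≤ ((i:ℤ) - (j:ℤ)).natAbs
  · rw [if_pos hc, if_pos (by rw [Int.abs_eq_natAbs]; exact_mod_cast hc)]
    rcases Int.natAbs_eq ((i:ℤ) - (j:ℤ)) with he | he
    · have hr : (i:ℝ) - (j:ℝ) = (((i:ℤ) - (j:ℤ)).natAbs : ℝ) := by
        have := congrArg (fun z : ℤ => (z:ℝ)) he
        simp only [Int.cast_sub, Int.cast_natCast, Int.cast_neg] at this
        exact this
      rw [hr]
    · have hr : (i:ℝ) - (j:ℝ) = -(((i:ℤ) - (j:ℤ)).natAbs : ℝ) := by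
        have := congrArg (fun z : ℤ => (z:ℝ)) he
        simp only [Int.cast_sub, Int.cast_natCast, Int.cast_neg] at this
        exact this
      rw [hr]
      set x : ℝ := (((i:ℤ) - (j:ℤ)).natAbs : ℝ)
      rw [show (-x)/(N:ℝ) = -(x/N) by ring, abs_neg,
          show (-x-1)/(N:ℝ) = -((x+1)/N) by ring, abs_neg,
          show (-x+1)/(N:ℝ) = -((x-1)/N) by ring, abs_neg]
      ring
  · rw [if_neg hc, if_neg]
    intro h
    rw [Int.abs_eq_natAbs] at h
    exact hc (by exact_mod_cast h)


section
variable (H : ℝ)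

noncomputable def GG (N k : ℕ) : ℝ :=
  (2 * |((k:ℝ)) / N| ^ (2 * H) - |((k:ℝ) - 1) / N| ^ (2 * H)
    - |((k:ℝ) + 1) / N| ^ (2 * H)) ^ 2

noncomputable def Asum (M : ℕ) : ℝ := ∑ m ∈ Finset.Icc 1 M, (m:ℝ)^(4*H-4)
noncomputable def Bsum (M : ℕ) : ℝ := ∑ m ∈ Finset.Icc 1 M, (m:ℝ)^(4*H-3)

end

section main
variable {H : ℝ} (h1 : 3/4 < H) (h2 : H < 1)

include h1 h2 in
lemma tendsto_Asum : Tendsto (fun M:ℕ => Asum H M/(M:ℝ)^(4*H-3)) atTop (nhds (1/(4*H-3))) := by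
  have h := sum_rpow_tendsto (p := 4*H-4) (by linarith)
  have e : 4*H-3 = 4*H-4+1 := by ring
  rw [e]
  exact h

include h1 h2 in
lemma tendsto_Bsum : Tendsto (fun M:ℕ => Bsum H M/(M:ℝ)^(4*H-2)) atTop (nhds (1/(4*H-2))) := by
  have h := sum_rpow_tendsto (p := 4*H-3) (by linarith)
  have e : 4*H-2 = 4*H-3+1 := by ring
  rw [e]
  exact h

-- ratio tendsto helpers
lemma ratio_sub_one : Tendsto (fun N:ℕ => ((N:ℝ)-1)/(N:ℝ)) atTop (nhds 1) := by
  have h := (tendsto_const_nhds (x := (1:ℝ)) (f := atTop (α := ℕ))).sub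
    tendsto_one_div_atTop_nhds_zero_nat
  rw [sub_zero] at h
  apply h.congr'
  filter_upwards [eventually_ge_atTop 1] with N hN
  have : (N:ℝ) ≠ 0 := by positivity
  field_simp

lemma ratio_add_one : Tendsto (fun N:ℕ => ((N:ℝ)+1)/(N:ℝ)) atTop (nhds 1) := by
  have h := (tendsto_const_nhds (x := (1:ℝ)) (f := atTop (α := ℕ))).add
    tendsto_one_div_atTop_nhds_zero_nat
  rw [add_zero] at h
  apply h.congr'
  filter_upwards [eventually_ge_atTop 1] with N hN
  have : (N:ℝ) ≠ 0 := by positivity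
  field_simp

lemma ratio_rpow_one {f : ℕ → ℝ} (hf : Tendsto f atTop (nhds 1)) (a : ℝ) :
    Tendsto (fun N => (f N)^a) atTop (nhds 1) := by
  have hc : ContinuousAt (fun x:ℝ => x^a) 1 :=
    Real.continuousAt_rpow_const 1 a (Or.inl one_ne_zero)
  have := hc.tendsto.comp hf
  simpa [Real.one_rpow, Function.comp_def] using this

include h1 h2 in
lemma hi_tendsto :
    Tendsto (fun N : ℕ => ∑ k ∈ Icc 2 N, (N:ℝ)^2 * (2*((N:ℝ)-(k:ℝ))
        * ((2*H*(2*H-1)*((k:ℝ)-1)^(2*H-2))^2/((N:ℝ)^(2*H))^2)))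
      atTop (nhds (2*(2*H*(2*H-1))^2*(1*(1/(4*H-3)) - 1*(1/(4*H-2))))) := by
  have h43 : (0:ℝ) < 4*H-3 := by linarith
  have stepA : ∀ N : ℕ, (∑ k ∈ Icc 2 N, (N:ℝ)^2 * (2*((N:ℝ)-(k:ℝ))
      * ((2*H*(2*H-1)*((k:ℝ)-1)^(2*H-2))^2/((N:ℝ)^(2*H))^2)))
      = 2*(2*H*(2*H-1))^2*((N:ℝ)^2/((N:ℝ)^(2*H))^2)
        * (((N:ℝ)-1)*Asum H (N-1) - Bsum H (N-1)) := by
    intro N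
    have e1 : (∑ k ∈ Icc 2 N, (N:ℝ)^2 * (2*((N:ℝ)-(k:ℝ))
        * ((2*H*(2*H-1)*((k:ℝ)-1)^(2*H-2))^2/((N:ℝ)^(2*H))^2)))
        = 2*(2*H*(2*H-1))^2*((N:ℝ)^2/((N:ℝ)^(2*H))^2)
          * ∑ k ∈ Icc 2 N, ((N:ℝ)-(k:ℝ))*((k:ℝ)-1)^(4*H-4) := by
      rw [Finset.mul_sum]
      apply Finset.sum_congr rfl
      intro k hk
      simp only [Finset.mem_Icc] at hk
      have hk2 : (2:ℝ) ≤ (k:ℝ) := by exact_mod_cast hk.1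
      rw [mul_pow (2*H*(2*H-1)), rpow_sq (by linarith : (0:ℝ) ≤ (k:ℝ)-1) (2*H-2),
        show 2*(2*H-2) = 4*H-4 by ring]
      ring
    rw [e1, hi_sum (4*H-4) N, show (4*H-4)+1 = 4*H-3 by ring]
    unfold Asum Bsum
    rfl
  have t0 := ratio_rpow_one ratio_sub_one (4*H-2)
  have tA : Tendsto (fun N : ℕ => Asum H (N-1)/((N:ℝ)-1)^(4*H-3))
      atTop (nhds (1/(4*H-3))) := by
    have h := (tendsto_Asum h1 h2).comp (tendsto_sub_atTop_nat 1)
    apply h.congr'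
    filter_upwards [eventually_ge_atTop 1] with N hN
    simp only [Function.comp_apply]
    rw [Nat.cast_sub hN, Nat.cast_one]
  have tB : Tendsto (fun N : ℕ => Bsum H (N-1)/((N:ℝ)-1)^(4*H-2))
      atTop (nhds (1/(4*H-2))) := by
    have h := (tendsto_Bsum h1 h2).comp (tendsto_sub_atTop_nat 1)
    apply h.congr'
    filter_upwards [eventually_ge_atTop 1] with N hN
    simp only [Function.comp_apply]
    rw [Nat.cast_sub hN, Nat.cast_one]
  have nice := Tendsto.const_mul (2*(2*H*(2*H-1))^2) ((t0.mul tA).sub (t0.mul tB))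
  apply nice.congr'
  filter_upwards [eventually_ge_atTop 2] with N hN
  rw [stepA N]
  have hN2 : (2:ℝ) ≤ (N:ℝ) := by exact_mod_cast hN
  have hn : (0:ℝ) < (N:ℝ) := by linarith
  have hu : (0:ℝ) < (N:ℝ)-1 := by linarith
  have hnrel : (N:ℝ)^(4*H) = (N:ℝ)^(4*H-2)*(N:ℝ)^2 := by
    rw [← Real.rpow_natCast (N:ℝ) 2, ← Real.rpow_add hn]
    congr 1
    push_cast
    ring
  have hurel : ((N:ℝ)-1)^(4*H-2) = ((N:ℝ)-1)^(4*H-3)*((N:ℝ)-1) := by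
    rw [← Real.rpow_add_one (ne_of_gt hu) (4*H-3)]
    congr 1
    ring
  have ne1 : ((N:ℝ)-1)^(4*H-3) ≠ 0 := ne_of_gt (Real.rpow_pos_of_pos hu _)
  have ne2 : ((N:ℝ))^(4*H-2) ≠ 0 := ne_of_gt (Real.rpow_pos_of_pos hn _)
  have ne3 : ((N:ℝ)) ≠ 0 := ne_of_gt hn
  have ne4 : ((N:ℝ)-1) ≠ 0 := ne_of_gt hu
  rw [rpow_sq hn.le (2*H), show 2*(2*H) = 4*H by ring, Real.div_rpow hu.le hn.le,
    hnrel, hurel]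
  field_simp

include h1 h2 in
lemma lo_tendsto :
    Tendsto (fun N : ℕ => ∑ k ∈ Icc 2 N, (N:ℝ)^2 * (2*((N:ℝ)-(k:ℝ))
        * ((2*H*(2*H-1)*((k:ℝ)+1)^(2*H-2))^2/((N:ℝ)^(2*H))^2)))
      atTop (nhds (2*(2*H*(2*H-1))^2*(1*(1/(4*H-3)) - 1*(1/(4*H-2))))) := by
  have h43 : (0:ℝ) < 4*H-3 := by linarith
  have stepA : ∀ N : ℕ, 1 ≤ N → (∑ k ∈ Icc 2 N, (N:ℝ)^2 * (2*((N:ℝ)-(k:ℝ))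
      * ((2*H*(2*H-1)*((k:ℝ)+1)^(2*H-2))^2/((N:ℝ)^(2*H))^2)))
      = 2*(2*H*(2*H-1))^2*((N:ℝ)^2/((N:ℝ)^(2*H))^2)
        * (((N:ℝ)+1)*Asum H (N+1) - Bsum H (N+1) - (N:ℝ) - ((N:ℝ)-1)*(2:ℝ)^(4*H-4)) := by
    intro N hN
    have e1 : (∑ k ∈ Icc 2 N, (N:ℝ)^2 * (2*((N:ℝ)-(k:ℝ))
        * ((2*H*(2*H-1)*((k:ℝ)+1)^(2*H-2))^2/((N:ℝ)^(2*H))^2)))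
        = 2*(2*H*(2*H-1))^2*((N:ℝ)^2/((N:ℝ)^(2*H))^2)
          * ∑ k ∈ Icc 2 N, ((N:ℝ)-(k:ℝ))*((k:ℝ)+1)^(4*H-4) := by
      rw [Finset.mul_sum]
      apply Finset.sum_congr rfl
      intro k hk
      rw [mul_pow (2*H*(2*H-1)), rpow_sq (by positivity : (0:ℝ) ≤ (k:ℝ)+1) (2*H-2),
        show 2*(2*H-2) = 4*H-4 by ring]
      ring
    rw [e1, lo_sum (4*H-4) N hN, show (4*H-4)+1 = 4*H-3 by ring]
    unfold Asum Bsum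
    rfl
  have t0 := ratio_rpow_one ratio_add_one (4*H-2)
  have tA : Tendsto (fun N : ℕ => Asum H (N+1)/((N:ℝ)+1)^(4*H-3))
      atTop (nhds (1/(4*H-3))) := by
    have h := (tendsto_Asum h1 h2).comp (tendsto_add_atTop_nat 1)
    apply h.congr
    intro N
    simp only [Function.comp_apply, Nat.cast_add, Nat.cast_one]
  have tB : Tendsto (fun N : ℕ => Bsum H (N+1)/((N:ℝ)+1)^(4*H-2))
      atTop (nhds (1/(4*H-2))) := by
    have h := (tendsto_Bsum h1 h2).comp (tendsto_add_atTop_nat 1)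
    apply h.congr
    intro N
    simp only [Function.comp_apply, Nat.cast_add, Nat.cast_one]
  have t3 : Tendsto (fun N:ℕ => (N:ℝ)^(-(4*H-3))) atTop (nhds 0) :=
    (tendsto_rpow_neg_atTop h43).comp tendsto_natCast_atTop_atTop
  have t4 : Tendsto (fun N:ℕ => 1 + (((N:ℝ)-1)/(N:ℝ))*(2:ℝ)^(4*H-4)) atTop
      (nhds (1 + 1*(2:ℝ)^(4*H-4))) :=
    tendsto_const_nhds.add (ratio_sub_one.mul tendsto_const_nhds)
  have nice := Tendsto.const_mul (2*(2*H*(2*H-1))^2)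
    (((t0.mul tA).sub (t0.mul tB)).sub (t3.mul t4))
  rw [show (1*(1/(4*H-3)) - 1*(1/(4*H-2)) - 0*(1+1*(2:ℝ)^(4*H-4)))
      = (1*(1/(4*H-3)) - 1*(1/(4*H-2))) by ring] at nice
  apply nice.congr'
  filter_upwards [eventually_ge_atTop 2] with N hN
  rw [stepA N (by omega)]
  have hN2 : (2:ℝ) ≤ (N:ℝ) := by exact_mod_cast hN
  have hn : (0:ℝ) < (N:ℝ) := by linarith
  have hv : (0:ℝ) < (N:ℝ)+1 := by linarith
  have hnrel : (N:ℝ)^(4*H) = (N:ℝ)^(4*H-2)*(N:ℝ)^2 := by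
    rw [← Real.rpow_natCast (N:ℝ) 2, ← Real.rpow_add hn]
    congr 1
    push_cast
    ring
  have hnrel2 : (N:ℝ)^(4*H-2) = (N:ℝ)^(4*H-3)*(N:ℝ) := by
    rw [← Real.rpow_add_one (ne_of_gt hn) (4*H-3)]
    congr 1
    ring
  have hvrel : ((N:ℝ)+1)^(4*H-2) = ((N:ℝ)+1)^(4*H-3)*((N:ℝ)+1) := by
    rw [← Real.rpow_add_one (ne_of_gt hv) (4*H-3)]
    congr 1
    ring
  have ne1 : ((N:ℝ)+1)^(4*H-3) ≠ 0 := ne_of_gt (Real.rpow_pos_of_pos hv _)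
  have ne2 : ((N:ℝ))^(4*H-3) ≠ 0 := ne_of_gt (Real.rpow_pos_of_pos hn _)
  have ne3 : ((N:ℝ)) ≠ 0 := ne_of_gt hn
  have ne4 : ((N:ℝ)+1) ≠ 0 := ne_of_gt hv
  rw [rpow_sq hn.le (2*H), show 2*(2*H) = 4*H by ring, Real.div_rpow hv.le hn.le,
    Real.rpow_neg hn.le, hnrel, hnrel2, hvrel]
  field_simp
  ring

end main

/-- For `H ∈ (3/4,1)`,
`N² ∑_{1≤i,j≤N, |i-j|≥2} (2|((i-j)/N)|^{2H} - |((i-j-1)/N)|^{2H} - |((i-j+1)/N)|^{2H})²`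
converges to `H²(2H-1)/(H-3/4)` as `N → ∞`. -/
theorem stmt_3 (H : ℝ) (h1 : 3/4 < H) (h2 : H < 1) :
    Tendsto (fun N : ℕ =>
      (N : ℝ) ^ 2 * ∑ i ∈ Finset.Icc 1 N, ∑ j ∈ Finset.Icc 1 N,
        if 2 ≤ |(i : ℤ) - (j : ℤ)| then
          (2 * |((i : ℝ) - (j : ℝ)) / N| ^ (2 * H)
            - |((i : ℝ) - (j : ℝ) - 1) / N| ^ (2 * H)
            - |((i : ℝ) - (j : ℝ) + 1) / N| ^ (2 * H)) ^ 2
        else 0)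
      atTop (nhds (H ^ 2 * (2 * H - 1) / (H - 3/4))) := by
  have hq1 : (1:ℝ) < 2*H := by linarith
  have hq2 : 2*H < 2 := by linarith
  have h43 : (0:ℝ) < 4*H-3 := by linarith
  have h42 : (0:ℝ) < 4*H-2 := by linarith
  have hc : (0:ℝ) < 2*H*(2*H-1) := by nlinarith
  -- rewrite the function
  have main_eq : ∀ N : ℕ,
      (N : ℝ) ^ 2 * (∑ i ∈ Finset.Icc 1 N, ∑ j ∈ Finset.Icc 1 N,
        if 2 ≤ |(i : ℤ) - (j : ℤ)| then
          (2 * |((i : ℝ) - (j : ℝ)) / N| ^ (2 * H)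
            - |((i : ℝ) - (j : ℝ) - 1) / N| ^ (2 * H)
            - |((i : ℝ) - (j : ℝ) + 1) / N| ^ (2 * H)) ^ 2
        else 0)
      = ∑ k ∈ Icc 2 N, (N:ℝ)^2 * (2*((N:ℝ)-(k:ℝ)) * GG H N k) := by
    intro N
    have e1 : (∑ i ∈ Finset.Icc 1 N, ∑ j ∈ Finset.Icc 1 N,
        if 2 ≤ |(i : ℤ) - (j : ℤ)| then
          (2 * |((i : ℝ) - (j : ℝ)) / N| ^ (2 * H)
            - |((i : ℝ) - (j : ℝ) - 1) / N| ^ (2 * H)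
            - |((i : ℝ) - (j : ℝ) + 1) / N| ^ (2 * H)) ^ 2
        else 0)
        = ∑ i ∈ Finset.Icc 1 N, ∑ j ∈ Finset.Icc 1 N,
          (if 2 ≤ ((i:ℤ) - (j:ℤ)).natAbs then GG H N ((i:ℤ) - (j:ℤ)).natAbs else 0) := by
      apply Finset.sum_congr rfl
      intro i _
      apply Finset.sum_congr rfl
      intro j _
      exact summand_eq H N i j
    rw [e1, double_sum_eq (GG H N) N, Finset.mul_sum]
  -- key pointwise facts
  have hGkey : ∀ N k : ℕ, 2 ≤ k → k ≤ N →
      GG H N k = (((k:ℝ)+1)^(2*H) - 2*(k:ℝ)^(2*H) + ((k:ℝ)-1)^(2*H))^2/((N:ℝ)^(2*H))^2 := by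
    intro N k hk hkN
    have hk2 : (2:ℝ) ≤ (k:ℝ) := by exact_mod_cast hk
    have hN2 : (2:ℝ) ≤ (N:ℝ) := by
      have : 2 ≤ N := le_trans hk hkN
      exact_mod_cast this
    have hN0 : (0:ℝ) < (N:ℝ) := by linarith
    have hD : ((N:ℝ)^(2*H)) ≠ 0 := ne_of_gt (Real.rpow_pos_of_pos hN0 _)
    unfold GG
    rw [abs_of_nonneg (by positivity), abs_of_nonneg (div_nonneg (by linarith) hN0.le),
        abs_of_nonneg (div_nonneg (by linarith) hN0.le),
        Real.div_rpow (by positivity) hN0.le,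
        Real.div_rpow (by linarith) hN0.le,
        Real.div_rpow (by linarith) hN0.le]
    field_simp
    ring
  have hsq : ∀ N k : ℕ, 2 ≤ k → k ≤ N →
      (2*H*(2*H-1)*((k:ℝ)+1)^(2*H-2))^2
        ≤ (((k:ℝ)+1)^(2*H) - 2*(k:ℝ)^(2*H) + ((k:ℝ)-1)^(2*H))^2 ∧
      (((k:ℝ)+1)^(2*H) - 2*(k:ℝ)^(2*H) + ((k:ℝ)-1)^(2*H))^2
        ≤ (2*H*(2*H-1)*((k:ℝ)-1)^(2*H-2))^2 := by
    intro N k hk hkN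
    have hk2 : (2:ℝ) ≤ (k:ℝ) := by exact_mod_cast hk
    obtain ⟨hl, hr⟩ := second_diff_bounds (q := 2*H) (x := (k:ℝ)) hq1 hq2 (by linarith)
    have hlow0 : (0:ℝ) ≤ 2*H*(2*H-1)*((k:ℝ)+1)^(2*H-2) :=
      mul_nonneg hc.le (Real.rpow_nonneg (by linarith) _)
    constructor
    · exact pow_le_pow_left₀ hlow0 hl 2
    · exact pow_le_pow_left₀ (le_trans hlow0 hl) hr 2
  -- squeeze
  have hlim := lo_tendsto h1 h2
  have hlim2 := hi_tendsto h1 h2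
  have hval : 2*(2*H*(2*H-1))^2*(1*(1/(4*H-3)) - 1*(1/(4*H-2)))
      = H ^ 2 * (2 * H - 1) / (H - 3/4) := by
    have h34 : (H - 3/4) ≠ 0 := by intro h; nlinarith
    have ne3 : (4*H-3) ≠ 0 := ne_of_gt h43
    have ne2 : (4*H-2) ≠ 0 := ne_of_gt h42
    rw [eq_div_iff h34, one_mul, one_mul, div_sub_div _ _ ne3 ne2, mul_div_assoc',
      div_mul_eq_mul_div, div_eq_iff (mul_ne_zero ne3 ne2)]
    ring
  rw [hval] at hlim hlim2
  apply tendsto_of_tendsto_of_tendsto_of_le_of_le' hlim hlim2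
  · filter_upwards with N
    rw [main_eq N]
    apply Finset.sum_le_sum
    intro k hk
    simp only [Finset.mem_Icc] at hk
    have hkN := hk.2
    have hk2 := hk.1
    have hkr : (2:ℝ) ≤ (k:ℝ) := by exact_mod_cast hk2
    have hNr : (2:ℝ) ≤ (N:ℝ) := by
      have : 2 ≤ N := le_trans hk2 hkN
      exact_mod_cast this
    have hkNr : (k:ℝ) ≤ (N:ℝ) := by exact_mod_cast hkN
    rw [hGkey N k hk2 hkN]
    apply mul_le_mul_of_nonneg_left _ (by positivity : (0:ℝ) ≤ (N:ℝ)^2)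
    apply mul_le_mul_of_nonneg_left _ (by linarith : (0:ℝ) ≤ 2*((N:ℝ)-(k:ℝ)))
    exact div_le_div_of_nonneg_right (hsq N k hk2 hkN).1 (by positivity)
  · filter_upwards with N
    rw [main_eq N]
    apply Finset.sum_le_sum
    intro k hk
    simp only [Finset.mem_Icc] at hk
    have hkN := hk.2
    have hk2 := hk.1
    have hkr : (2:ℝ) ≤ (k:ℝ) := by exact_mod_cast hk2
    have hNr : (2:ℝ) ≤ (N:ℝ) := by
      have : 2 ≤ N := le_trans hk2 hkN
      exact_mod_cast this
    have hkNr : (k:ℝ) ≤ (N:ℝ) := by exact_mod_cast hkN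
    rw [hGkey N k hk2 hkN]
    apply mul_le_mul_of_nonneg_left _ (by positivity : (0:ℝ) ≤ (N:ℝ)^2)
    apply mul_le_mul_of_nonneg_left _ (by linarith : (0:ℝ) ≤ 2*((N:ℝ)-(k:ℝ)))
    exact div_le_div_of_nonneg_right (hsq N k hk2 hkN).2 (by positivity)
end

section
/- Define \(g(x) = \int_0^{1-x}\int_0^1\int_0^1 |(z-w)(x+y-z)(y-w)|^{H-1}\, dy\, dz\, dw\) for \(x \in [0,1]\) and \(H \in (1/2,1)\). Then \(g\) is bounded on \([0,1]\). -/
open Real MeasureTheory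

lemma aux_L1 {r : ℝ} (hr : -1 < r) (hr0 : r < 0) {c : ℝ} (hc0 : 0 ≤ c) (hc1 : c ≤ 1) :
    IntervalIntegrable (fun w => |w - c| ^ r) volume 0 1 ∧
    (∫ w in (0:ℝ)..1, |w - c| ^ r) ≤ 2 / (r + 1) := by
  have hr1 : 0 < r + 1 := by linarith
  -- piece on [0, c]
  have e1 : Set.EqOn (fun w => (c - w) ^ r) (fun w => |w - c| ^ r) (Set.uIcc (0:ℝ) c) := by
    intro w hw
    rw [Set.uIcc_of_le hc0] at hw
    simp only
    rw [abs_sub_comm, abs_of_nonneg (by linarith [hw.2] : (0:ℝ) ≤ c - w)]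
  have i1' : IntervalIntegrable (fun w => (c - w) ^ r) volume 0 c := by
    have := (intervalIntegral.intervalIntegrable_rpow' (a := c) (b := 0) hr).comp_sub_left c
    simpa using this
  have i1 : IntervalIntegrable (fun w => |w - c| ^ r) volume 0 c := by
    refine i1'.congr ?_
    intro w hw
    exact e1 (Set.uIoc_subset_uIcc hw)
  have v1 : (∫ w in (0:ℝ)..c, |w - c| ^ r) = c ^ (r + 1) / (r + 1) := by
    rw [← intervalIntegral.integral_congr e1]
    rw [intervalIntegral.integral_comp_sub_left (fun u => u ^ r) c]
    simp only [sub_self, sub_zero]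
    rw [integral_rpow (Or.inl hr), Real.zero_rpow (ne_of_gt hr1)]
    ring
  -- piece on [c, 1]
  have e2 : Set.EqOn (fun w => (w - c) ^ r) (fun w => |w - c| ^ r) (Set.uIcc c 1) := by
    intro w hw
    rw [Set.uIcc_of_le hc1] at hw
    simp only
    rw [abs_of_nonneg (by linarith [hw.1] : (0:ℝ) ≤ w - c)]
  have i2' : IntervalIntegrable (fun w => (w - c) ^ r) volume c 1 := by
    have := (intervalIntegral.intervalIntegrable_rpow' (a := 0) (b := 1 - c) hr).comp_sub_right c
    simpa using this
  have i2 : IntervalIntegrable (fun w => |w - c| ^ r) volume c 1 := by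
    refine i2'.congr ?_
    intro w hw
    exact e2 (Set.uIoc_subset_uIcc hw)
  have v2 : (∫ w in c..1, |w - c| ^ r) = (1 - c) ^ (r + 1) / (r + 1) := by
    rw [← intervalIntegral.integral_congr e2]
    rw [intervalIntegral.integral_comp_sub_right (fun u => u ^ r) c]
    simp only [sub_self]
    rw [integral_rpow (Or.inl hr), Real.zero_rpow (ne_of_gt hr1)]
    ring
  refine ⟨i1.trans i2, ?_⟩
  rw [← intervalIntegral.integral_add_adjacent_intervals i1 i2, v1, v2]
  have b1 : c ^ (r + 1) ≤ 1 := Real.rpow_le_one hc0 hc1 hr1.le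
  have b2 : (1 - c) ^ (r + 1) ≤ 1 := Real.rpow_le_one (by linarith) (by linarith) hr1.le
  rw [← add_div]
  exact div_le_div_of_nonneg_right (by linarith) hr1.le

lemma aux_L0 {q : ℝ} (hq : q < 0) (a b c : ℝ) :
    |a * b * c| ^ q ≤ (|a| ^ (2*q) + |c| ^ (2*q)) * |b| ^ q := by
  have h2 : ∀ t : ℝ, |t| ^ (2*q) = (|t| * |t|) ^ q := by
    intro t
    rw [Real.rpow_mul (abs_nonneg t)]
    congr 1
    rw [show (2:ℝ) = ((2:ℕ):ℝ) by norm_num, Real.rpow_natCast]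
    ring
  have habs : |a * b * c| = (|a| * |c|) * |b| := by
    rw [abs_mul, abs_mul]; ring
  rw [habs, Real.mul_rpow (mul_nonneg (abs_nonneg a) (abs_nonneg c)) (abs_nonneg b)]
  refine mul_le_mul_of_nonneg_right ?_ (Real.rpow_nonneg (abs_nonneg b) q)
  rcases le_total |a| |c| with h | h
  · have key : (|a| * |c|) ^ q ≤ |a| ^ (2*q) := by
      rw [h2 a]
      rcases eq_or_lt_of_le (abs_nonneg a) with h0 | h0
      · rw [← h0]
        simp [Real.zero_rpow (ne_of_lt hq)]
      · exact Real.rpow_le_rpow_of_nonpos (by positivity)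
          (mul_le_mul_of_nonneg_left h (abs_nonneg a)) hq.le
    have := Real.rpow_nonneg (abs_nonneg c) (2*q)
    linarith
  · have key : (|a| * |c|) ^ q ≤ |c| ^ (2*q) := by
      rw [h2 c]
      rcases eq_or_lt_of_le (abs_nonneg c) with h0 | h0
      · rw [← h0]
        simp [Real.zero_rpow (ne_of_lt hq)]
      · exact Real.rpow_le_rpow_of_nonpos (by positivity)
          (mul_le_mul_of_nonneg_right h (abs_nonneg c)) hq.le
    have := Real.rpow_nonneg (abs_nonneg a) (2*q)
    linarith

lemma aux_inner {H : ℝ} (h1 : 1/2 < H) (h2 : H < 1) (x y z : ℝ)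
    (hy0 : 0 ≤ y) (hy1 : y ≤ 1) (hz0 : 0 ≤ z) (hz1 : z ≤ 1) :
    |∫ w in (0:ℝ)..1, |(z - w) * (x + y - z) * (y - w)| ^ (H - 1)|
      ≤ (4 / (2*H - 1)) * |x + y - z| ^ (H - 1) := by
  have hq : H - 1 < 0 := by linarith
  have h2q : -1 < 2*(H-1) := by linarith
  have hzl := aux_L1 (r := 2*(H-1)) h2q (by linarith) hz0 hz1
  have hyl := aux_L1 (r := 2*(H-1)) h2q (by linarith) hy0 hy1
  set f := fun w => |(z - w) * (x + y - z) * (y - w)| ^ (H - 1) with hf_def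
  set M := fun w => (|w - z| ^ (2*(H-1)) + |w - y| ^ (2*(H-1))) * |x + y - z| ^ (H - 1)
    with hM_def
  have hfM : ∀ w, f w ≤ M w := by
    intro w
    have := aux_L0 hq (z - w) (x + y - z) (y - w)
    rw [abs_sub_comm z w, abs_sub_comm y w] at this
    exact this
  have hM : IntervalIntegrable M volume 0 1 := (hzl.1.add hyl.1).mul_const _
  have hMint : (∫ w in (0:ℝ)..1, M w) ≤ (4/(2*H-1)) * |x + y - z| ^ (H - 1) := by
    rw [hM_def]
    rw [intervalIntegral.integral_mul_const]
    refine mul_le_mul_of_nonneg_right ?_ (Real.rpow_nonneg (abs_nonneg _) _)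
    rw [intervalIntegral.integral_add hzl.1 hyl.1]
    have b1 := hzl.2
    have b2 := hyl.2
    have he : 2*(H-1) + 1 = 2*H - 1 := by ring
    rw [he] at b1 b2
    have hpos : 0 < 2*H - 1 := by linarith
    have : 2 / (2*H-1) + 2 / (2*H-1) = 4 / (2*H-1) := by ring
    linarith
  have hMnn : 0 ≤ ∫ w in (0:ℝ)..1, M w := by
    refine intervalIntegral.integral_nonneg (by norm_num) (fun u _ => ?_)
    exact mul_nonneg (add_nonneg (Real.rpow_nonneg (abs_nonneg _) _)
      (Real.rpow_nonneg (abs_nonneg _) _)) (Real.rpow_nonneg (abs_nonneg _) _)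
  by_cases hf : IntervalIntegrable f volume 0 1
  · have hfnn : 0 ≤ ∫ w in (0:ℝ)..1, f w :=
      intervalIntegral.integral_nonneg (by norm_num)
        (fun u _ => Real.rpow_nonneg (abs_nonneg _) _)
    rw [abs_of_nonneg hfnn]
    exact (intervalIntegral.integral_mono_on (by norm_num) hf hM
      (fun w _ => hfM w)).trans hMint
  · rw [intervalIntegral.integral_undef hf, abs_zero]
    exact hMnn.trans hMint

lemma aux_mid {H : ℝ} (h1 : 1/2 < H) (h2 : H < 1) (x y : ℝ)
    (hx0 : 0 ≤ x) (hy0 : 0 ≤ y) (hxy : x + y ≤ 1) :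
    |∫ z in (0:ℝ)..1, ∫ w in (0:ℝ)..1, |(z - w) * (x + y - z) * (y - w)| ^ (H - 1)|
      ≤ (4 / (2*H - 1)) * (2 / H) := by
  have hy1 : y ≤ 1 := by linarith
  have hH0 : 0 < H := by linarith
  have h21 : 0 < 2*H - 1 := by linarith
  set G := fun z => ∫ w in (0:ℝ)..1, |(z - w) * (x + y - z) * (y - w)| ^ (H - 1) with hG_def
  have hGnn : ∀ z, 0 ≤ G z := fun z =>
    intervalIntegral.integral_nonneg (by norm_num)
      (fun u _ => Real.rpow_nonneg (abs_nonneg _) _)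
  set M := fun z => (4/(2*H-1)) * |z - (x+y)| ^ (H - 1) with hM_def
  have hL1 := aux_L1 (r := H - 1) (by linarith) (by linarith) (c := x + y)
    (by linarith) hxy
  have hMint : IntervalIntegrable M volume 0 1 := hL1.1.const_mul _
  have hGM : ∀ z ∈ Set.Icc (0:ℝ) 1, G z ≤ M z := by
    intro z hz
    have hb := aux_inner h1 h2 x y z hy0 hy1 hz.1 hz.2
    calc G z ≤ |G z| := le_abs_self _
    _ ≤ (4/(2*H-1)) * |x + y - z| ^ (H-1) := hb
    _ = M z := by rw [hM_def]; rw [abs_sub_comm]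
  have hMbound : (∫ z in (0:ℝ)..1, M z) ≤ (4/(2*H-1)) * (2/H) := by
    rw [hM_def, intervalIntegral.integral_const_mul]
    refine mul_le_mul_of_nonneg_left ?_ (by positivity)
    have hb := hL1.2
    rwa [show H - 1 + 1 = H by ring] at hb
  have hMnn : 0 ≤ ∫ z in (0:ℝ)..1, M z := by
    refine intervalIntegral.integral_nonneg (by norm_num) (fun u _ => ?_)
    exact mul_nonneg (by positivity) (Real.rpow_nonneg (abs_nonneg _) _)
  by_cases hG : IntervalIntegrable G volume 0 1
  · rw [abs_of_nonneg (intervalIntegral.integral_nonneg (by norm_num) fun u _ => hGnn u)]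
    exact (intervalIntegral.integral_mono_on (by norm_num) hG hMint hGM).trans hMbound
  · rw [intervalIntegral.integral_undef hG, abs_zero]
    exact hMnn.trans hMbound

/-- For `H ∈ (1/2,1)`, the function
`g(x) = ∫₀^{1-x}∫₀¹∫₀¹ |(z-w)(x+y-z)(y-w)|^{H-1} dz dw dy`
is bounded on `[0,1]`. -/
theorem stmt_10 (H : ℝ) (h1 : 1/2 < H) (h2 : H < 1) (g : ℝ → ℝ)
    (hg : ∀ x, g x =
      ∫ y in (0:ℝ)..(1 - x), ∫ z in (0:ℝ)..1, ∫ w in (0:ℝ)..1,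
        |(z - w) * (x + y - z) * (y - w)| ^ (H - 1)) :
    ∃ C : ℝ, ∀ x ∈ Set.Icc (0:ℝ) 1, |g x| ≤ C := by
  have h21 : 0 < 2*H - 1 := by linarith
  have hH0 : 0 < H := by linarith
  refine ⟨(4/(2*H-1)) * (2/H), fun x hx => ?_⟩
  rw [hg x]
  have key : ∀ y ∈ Set.uIoc (0:ℝ) (1 - x),
      ‖∫ z in (0:ℝ)..1, ∫ w in (0:ℝ)..1,
        |(z - w) * (x + y - z) * (y - w)| ^ (H - 1)‖ ≤ (4/(2*H-1)) * (2/H) := by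
    intro y hy
    rw [Set.uIoc_of_le (by linarith [hx.2] : (0:ℝ) ≤ 1 - x)] at hy
    rw [Real.norm_eq_abs]
    exact aux_mid h1 h2 x y hx.1 hy.1.le (by linarith [hy.2])
  have hle := intervalIntegral.norm_integral_le_of_norm_le_const key
  rw [Real.norm_eq_abs] at hle
  have habs : |1 - x - 0| ≤ 1 := by
    rw [abs_of_nonneg (by linarith [hx.2] : (0:ℝ) ≤ 1 - x - 0)]
    linarith [hx.1]
  calc |∫ y in (0:ℝ)..(1 - x), ∫ z in (0:ℝ)..1, ∫ w in (0:ℝ)..1,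
        |(z - w) * (x + y - z) * (y - w)| ^ (H - 1)|
      ≤ (4/(2*H-1)) * (2/H) * |1 - x - 0| := hle
    _ ≤ (4/(2*H-1)) * (2/H) * 1 := by
        refine mul_le_mul_of_nonneg_left habs (by positivity)
    _ = (4/(2*H-1)) * (2/H) := mul_one _
end
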